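/- The volume function of an ideal hyperbolic tetrahedron is strictly concave in its free angle parameters: the function f(α, β) = Λ(α) + Λ(β) + Λ(π - α - β) is strictly concave on the open convex region {(α, β) ∈ ℝ² : α > 0, β > 0, α + β < π}. -/

import Mathlib

open MeasureTheory Real

/-- The Lobachevsky function `Λ(θ) = -∫₀^θ log |2 sin t| dt`. -/
noncomputable def lobachevsky (θ : ℝ) : ℝ :=
  -∫ t in (0:ℝ)..θ, Real.log |2 * Real.sin t|

open Set

lemma combo_pos {a b x y : ℝ} (ha : 0 ≤ a) (hb : 0 ≤ b) (hab : a + b = 1)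
    (hx : 0 < x) (hy : 0 < y) : 0 < a * x + b * y := by
  rcases ha.lt_or_eq with h | h
  · have : 0 ≤ b * y := mul_nonneg hb hy.le
    nlinarith
  · have hb1 : b = 1 := by linarith
    simp [← h, hb1, hy]

lemma combo_lt {a b x y r : ℝ} (ha : 0 ≤ a) (hb : 0 ≤ b) (hab : a + b = 1)
    (hx : x < r) (hy : y < r) : a * x + b * y < r := by
  have h := combo_pos ha hb hab (sub_pos.2 hx) (sub_pos.2 hy)
  have h2 : a * (r - x) + b * (r - y) = (a + b) * r - (a * x + b * y) := by ring
  rw [hab, one_mul] at h2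
  linarith

-- sin lower bound by concavity
lemma sin_ge_lin {θ t : ℝ} (h0 : 0 < θ) (hπ : θ ≤ Real.pi) (ht : t ∈ Set.Icc 0 θ) :
    (Real.sin θ / θ) * t ≤ Real.sin t := by
  have hc := strictConcaveOn_sin_Icc.concaveOn
  have h1 : (1 - t/θ) • Real.sin 0 + (t/θ) • Real.sin θ ≤ Real.sin ((1 - t/θ) • (0:ℝ) + (t/θ) • θ) := by
    apply hc.2 ⟨le_refl 0, Real.pi_pos.le⟩
      ⟨h0.le, hπ⟩
    · have : t/θ ≤ 1 := by rw [div_le_one h0]; exact ht.2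
      linarith
    · exact div_nonneg ht.1 h0.le
    · ring
  have harg : (1 - t/θ) • (0:ℝ) + (t/θ) • θ = t := by
    field_simp
    rw [smul_eq_mul, smul_eq_mul, mul_zero, zero_add]
    field_simp
  rw [harg] at h1
  simp only [Real.sin_zero, smul_eq_mul, mul_zero, zero_add] at h1 ⊢
  calc Real.sin θ / θ * t = t/θ * Real.sin θ := by ring
  _ ≤ _ := h1

lemma neg_log_le {t : ℝ} (ht : 0 < t) : -Real.log t ≤ 2 * t ^ (-(1:ℝ)/2) := by
  have h1 : Real.log (t ^ (-(1:ℝ)/2)) ≤ t ^ (-(1:ℝ)/2) - 1 :=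
    Real.log_le_sub_one_of_pos (Real.rpow_pos_of_pos ht _)
  rw [Real.log_rpow ht] at h1
  have : (0:ℝ) ≤ t ^ (-(1:ℝ)/2) := (Real.rpow_pos_of_pos ht _).le
  linarith

lemma integrable_log_two_sin {θ : ℝ} (h0 : 0 < θ) (hπ : θ < Real.pi) :
    IntervalIntegrable (fun t => Real.log |2 * Real.sin t|) volume 0 θ := by
  set c := Real.sin θ / θ with hc
  have hcpos : 0 < c := div_pos (Real.sin_pos_of_pos_of_lt_pi h0 hπ) h0
  set C := |Real.log 2| + |Real.log c| + θ with hC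
  rw [intervalIntegrable_iff, uIoc_of_le h0.le]
  have hg : IntegrableOn (fun t : ℝ => C + 2 * t ^ (-(1:ℝ)/2)) (Set.Ioc 0 θ) := by
    have := (intervalIntegrable_const (c := C) (a := (0:ℝ)) (b := θ) (μ := volume)).add
      ((intervalIntegral.intervalIntegrable_rpow' (a := (0:ℝ)) (b := θ) (r := -(1:ℝ)/2)
        (by norm_num)).const_mul 2)
    rw [intervalIntegrable_iff, uIoc_of_le h0.le] at this
    exact this
  apply Integrable.mono' hg
  · exact ((Real.measurable_log.comp ((measurable_sin.const_mul 2).abs)).aestronglyMeasurable)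
  · filter_upwards [ae_restrict_mem measurableSet_Ioc] with t ht
    obtain ⟨ht0, htθ⟩ := ht
    have hsinpos : 0 < Real.sin t :=
      Real.sin_pos_of_pos_of_lt_pi ht0 (lt_of_le_of_lt htθ hπ)
    have habs : |2 * Real.sin t| = 2 * Real.sin t := abs_of_pos (by linarith)
    have hub : Real.sin t ≤ t := (Real.sin_lt ht0).le
    have hlb : c * t ≤ Real.sin t := sin_ge_lin h0 hπ.le ⟨ht0.le, htθ⟩
    have h2ct : (0:ℝ) < 2 * (c * t) := by positivity
    have hlog_ub : Real.log (2 * Real.sin t) ≤ Real.log 2 + Real.log t := by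
      rw [← Real.log_mul (by norm_num) ht0.ne']
      exact Real.log_le_log (by linarith) (by linarith)
    have hlog_lb : Real.log 2 + Real.log c + Real.log t ≤ Real.log (2 * Real.sin t) := by
      have : Real.log (2 * (c * t)) ≤ Real.log (2 * Real.sin t) :=
        Real.log_le_log h2ct (by nlinarith)
      rwa [Real.log_mul (by norm_num) (by positivity), Real.log_mul hcpos.ne' ht0.ne',
        ← add_assoc] at this
    have hrp : (0:ℝ) ≤ t ^ (-(1:ℝ)/2) := (Real.rpow_pos_of_pos ht0 _).le
    have hnl := neg_log_le ht0
    have hl1 : Real.log t ≤ t - 1 := Real.log_le_sub_one_of_pos ht0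
    rw [Real.norm_eq_abs, habs, abs_le]
    constructor
    · have := neg_abs_le (Real.log 2)
      have := neg_abs_le (Real.log c)
      simp only [hC]
      linarith
    · have := le_abs_self (Real.log 2)
      simp only [hC]
      have habsc : (0:ℝ) ≤ |Real.log c| := abs_nonneg _
      linarith

lemma hasDerivAt_lobachevsky {θ : ℝ} (h0 : 0 < θ) (hπ : θ < Real.pi) :
    HasDerivAt lobachevsky (-Real.log |2 * Real.sin θ|) θ := by
  have hs : 0 < Real.sin θ := Real.sin_pos_of_pos_of_lt_pi h0 hπ
  have hcont : ContinuousAt (fun t => Real.log |2 * Real.sin t|) θ := by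
    have h1 : ContinuousAt (fun t : ℝ => |2 * Real.sin t|) θ :=
      (continuous_abs.comp (continuous_const.mul Real.continuous_sin)).continuousAt
    have h2 : |2 * Real.sin θ| ≠ 0 := by rw [abs_ne_zero]; positivity
    exact h1.log h2
  have h := intervalIntegral.integral_hasDerivAt_right (integrable_log_two_sin h0 hπ)
    ((Real.measurable_log.comp
      ((measurable_sin.const_mul 2).abs)).aestronglyMeasurable.stronglyMeasurableAtFilter)
    hcont
  exact h.neg

lemma hasDerivAt_log_two_sin {θ : ℝ} (h0 : 0 < θ) (hπ : θ < Real.pi) :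
    HasDerivAt (fun x => Real.log |2 * Real.sin x|) (Real.cos θ / Real.sin θ) θ := by
  have hs : 0 < Real.sin θ := Real.sin_pos_of_pos_of_lt_pi h0 hπ
  have h1 : HasDerivAt (fun x => 2 * Real.sin x) (2 * Real.cos θ) θ :=
    (Real.hasDerivAt_sin θ).const_mul 2
  have h2 : HasDerivAt (fun x => Real.log (2 * Real.sin x))
      ((2 * Real.cos θ) / (2 * Real.sin θ)) θ := h1.log (by positivity)
  rw [mul_div_mul_left _ _ two_ne_zero] at h2
  apply h2.congr_of_eventuallyEq
  have hmem : {x : ℝ | 0 < Real.sin x} ∈ nhds θ :=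
    (isOpen_lt continuous_const Real.continuous_sin).mem_nhds hs
  filter_upwards [hmem] with x hx
  rw [abs_of_pos (by linarith : (0:ℝ) < 2 * Real.sin x)]

lemma key_pos {α β u v : ℝ} (hα : 0 < α) (hβ : 0 < β) (hαβ : α + β < Real.pi)
    (huv : ¬(u = 0 ∧ v = 0)) :
    0 < u^2 * (Real.cos α / Real.sin α) + v^2 * (Real.cos β / Real.sin β)
        + (u+v)^2 * (Real.cos (Real.pi - α - β) / Real.sin (Real.pi - α - β)) := by
  have hsa : 0 < Real.sin α := Real.sin_pos_of_pos_of_lt_pi hα (by linarith)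
  have hsb : 0 < Real.sin β := Real.sin_pos_of_pos_of_lt_pi hβ (by linarith)
  have hsg : 0 < Real.sin (α + β) := Real.sin_pos_of_pos_of_lt_pi (by linarith) hαβ
  have hab : Real.sin (Real.pi - α - β) = Real.sin (α + β) := by
    rw [show Real.pi - α - β = Real.pi - (α + β) by ring, Real.sin_pi_sub]
  have hcb : Real.cos (Real.pi - α - β) = -Real.cos (α + β) := by
    rw [show Real.pi - α - β = Real.pi - (α + β) by ring, Real.cos_pi_sub]
  set ca := Real.cos α with hca; set sa := Real.sin α with hsa'
  set cb := Real.cos β with hcb'; set sb := Real.sin β with hsb'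
  have hsadd : Real.sin (α + β) = sa * cb + ca * sb := Real.sin_add α β
  have hcadd : Real.cos (α + β) = ca * cb - sa * sb := Real.cos_add α β
  have hsgpos : 0 < sa * cb + ca * sb := by rw [← hsadd]; exact hsg
  have hN : 0 < (u*ca*sb - v*cb*sa)^2 + (u+v)^2 * (sa*sb)^2 := by
    rcases eq_or_ne (u + v) 0 with h | h
    · have hv : v = -u := by linarith
      have hu : u ≠ 0 := fun h0 => huv ⟨h0, by rw [hv, h0, neg_zero]⟩
      have he : u*ca*sb - v*cb*sa = u * (sa*cb + ca*sb) := by rw [hv]; ring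
      rw [he, h]
      have hne : u * (sa*cb + ca*sb) ≠ 0 := mul_ne_zero hu hsgpos.ne'
      have : 0 < (u * (sa*cb + ca*sb))^2 :=
        lt_of_le_of_ne (sq_nonneg _) (Ne.symm (pow_ne_zero 2 hne))
      nlinarith
    · have h2 : 0 < (u+v)^2 * (sa*sb)^2 := by
        have h3 : 0 < (u+v)^2 := lt_of_le_of_ne (sq_nonneg _) (Ne.symm (pow_ne_zero 2 h))
        positivity
      nlinarith [sq_nonneg (u*ca*sb - v*cb*sa)]
  rw [hab, hcb, hcadd, hsadd]
  have hEq : u^2 * (ca/sa) + v^2 * (cb/sb) + (u+v)^2 * (-(ca*cb - sa*sb)/(sa*cb + ca*sb))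
      = ((u*ca*sb - v*cb*sa)^2 + (u+v)^2 * (sa*sb)^2) / (sa*sb*(sa*cb + ca*sb)) := by
    field_simp
    ring
  rw [hEq]
  exact div_pos hN (by positivity)

lemma line_strictConcave (p1 p2 u v : ℝ) (huv : ¬(u = 0 ∧ v = 0))
    (hmem : ∀ t ∈ Set.Icc (0:ℝ) 1,
      0 < p1 + t*u ∧ 0 < p2 + t*v ∧ (p1 + t*u) + (p2 + t*v) < Real.pi) :
    StrictConcaveOn ℝ (Set.Icc (0:ℝ) 1)
      (fun t => lobachevsky (p1 + t*u) + lobachevsky (p2 + t*v)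
        + lobachevsky (Real.pi - (p1 + t*u) - (p2 + t*v))) := by
  set T : Set ℝ := {t | 0 < p1 + t*u ∧ 0 < p2 + t*v ∧ (p1 + t*u) + (p2 + t*v) < Real.pi}
    with hT
  have hIccT : Set.Icc (0:ℝ) 1 ⊆ T := fun t ht => hmem t ht
  -- basic inner derivatives
  have hαd : ∀ t : ℝ, HasDerivAt (fun s => p1 + s * u) u t := fun t =>
    (hasDerivAt_mul_const u).const_add p1
  have hβd : ∀ t : ℝ, HasDerivAt (fun s => p2 + s * v) v t := fun t =>
    (hasDerivAt_mul_const v).const_add p2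
  have hγd : ∀ t : ℝ, HasDerivAt (fun s => Real.pi - (p1 + s * u) - (p2 + s * v))
      (0 - u - v) t := fun t => ((hasDerivAt_const t Real.pi).sub (hαd t)).sub (hβd t)
  -- bounds for t ∈ T
  have hbounds : ∀ t ∈ T, (0 < p1 + t*u ∧ p1 + t*u < Real.pi) ∧
      (0 < p2 + t*v ∧ p2 + t*v < Real.pi) ∧
      (0 < Real.pi - (p1 + t*u) - (p2 + t*v) ∧
        Real.pi - (p1 + t*u) - (p2 + t*v) < Real.pi) := by
    intro t ht
    obtain ⟨h1, h2, h3⟩ := ht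
    exact ⟨⟨h1, by linarith⟩, ⟨h2, by linarith⟩, ⟨by linarith, by linarith⟩⟩
  -- g1 : the derivative of g
  set g1 : ℝ → ℝ := fun t =>
      -Real.log |2 * Real.sin (p1 + t*u)| * u
      + -Real.log |2 * Real.sin (p2 + t*v)| * v
      + -Real.log |2 * Real.sin (Real.pi - (p1 + t*u) - (p2 + t*v))| * (0 - u - v)
    with hg1def
  have hg' : ∀ t ∈ T, HasDerivAt
      (fun t => lobachevsky (p1 + t*u) + lobachevsky (p2 + t*v)
        + lobachevsky (Real.pi - (p1 + t*u) - (p2 + t*v))) (g1 t) t := by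
    intro t ht
    obtain ⟨⟨ha1, ha2⟩, ⟨hb1, hb2⟩, ⟨hc1, hc2⟩⟩ := hbounds t ht
    have h1 : HasDerivAt (fun s => lobachevsky (p1 + s*u))
        (-Real.log |2 * Real.sin (p1 + t*u)| * u) t := by
      simpa [Function.comp_def] using (hasDerivAt_lobachevsky ha1 ha2).comp t (hαd t)
    have h2 : HasDerivAt (fun s => lobachevsky (p2 + s*v))
        (-Real.log |2 * Real.sin (p2 + t*v)| * v) t := by
      simpa [Function.comp_def] using (hasDerivAt_lobachevsky hb1 hb2).comp t (hβd t)
    have h3 : HasDerivAt (fun s => lobachevsky (Real.pi - (p1 + s*u) - (p2 + s*v)))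
        (-Real.log |2 * Real.sin (Real.pi - (p1 + t*u) - (p2 + t*v))| * (0 - u - v)) t := by
      simpa [Function.comp_def] using (hasDerivAt_lobachevsky hc1 hc2).comp t (hγd t)
    exact (h1.add h2).add h3
  -- derivative of g1
  have hg1' : ∀ t ∈ T, HasDerivAt g1
      (-(Real.cos (p1 + t*u) / Real.sin (p1 + t*u) * u) * u
       + -(Real.cos (p2 + t*v) / Real.sin (p2 + t*v) * v) * v
       + -(Real.cos (Real.pi - (p1 + t*u) - (p2 + t*v))
            / Real.sin (Real.pi - (p1 + t*u) - (p2 + t*v)) * (0 - u - v)) * (0 - u - v)) t := by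
    intro t ht
    obtain ⟨⟨ha1, ha2⟩, ⟨hb1, hb2⟩, ⟨hc1, hc2⟩⟩ := hbounds t ht
    have h1 : HasDerivAt (fun s => -Real.log |2 * Real.sin (p1 + s*u)| * u)
        (-(Real.cos (p1 + t*u) / Real.sin (p1 + t*u) * u) * u) t := by
      have := ((hasDerivAt_log_two_sin ha1 ha2).comp t (hαd t)).neg.mul_const u
      simpa [Function.comp] using this
    have h2 : HasDerivAt (fun s => -Real.log |2 * Real.sin (p2 + s*v)| * v)
        (-(Real.cos (p2 + t*v) / Real.sin (p2 + t*v) * v) * v) t := by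
      have := ((hasDerivAt_log_two_sin hb1 hb2).comp t (hβd t)).neg.mul_const v
      simpa [Function.comp] using this
    have h3 : HasDerivAt
        (fun s => -Real.log |2 * Real.sin (Real.pi - (p1 + s*u) - (p2 + s*v))| * (0 - u - v))
        (-(Real.cos (Real.pi - (p1 + t*u) - (p2 + t*v))
            / Real.sin (Real.pi - (p1 + t*u) - (p2 + t*v)) * (0 - u - v)) * (0 - u - v)) t := by
      have := ((hasDerivAt_log_two_sin hc1 hc2).comp t (hγd t)).neg.mul_const (0 - u - v)
      simpa [Function.comp] using this
    exact (h1.add h2).add h3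
  -- g1 deriv is negative on T
  have hneg : ∀ t ∈ T, deriv g1 t < 0 := by
    intro t ht
    rw [(hg1' t ht).deriv]
    obtain ⟨h1, h2, h3⟩ := ht
    have hk := key_pos h1 h2 h3 huv
    nlinarith [hk]
  have hg1cont : ContinuousOn g1 (Set.Icc (0:ℝ) 1) := fun t ht =>
    ((hg1' t (hIccT ht)).continuousAt).continuousWithinAt
  have hg1anti : StrictAntiOn g1 (Set.Icc (0:ℝ) 1) := by
    apply strictAntiOn_of_deriv_neg (convex_Icc 0 1) hg1cont
    intro t ht
    rw [interior_Icc] at ht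
    exact hneg t (hIccT (Ioo_subset_Icc_self ht))
  have hgcont : ContinuousOn
      (fun t => lobachevsky (p1 + t*u) + lobachevsky (p2 + t*v)
        + lobachevsky (Real.pi - (p1 + t*u) - (p2 + t*v))) (Set.Icc (0:ℝ) 1) := fun t ht =>
    ((hg' t (hIccT ht)).continuousAt).continuousWithinAt
  apply StrictAntiOn.strictConcaveOn_of_deriv (convex_Icc 0 1) hgcont
  rw [interior_Icc]
  intro x hx y hy hxy
  rw [(hg' x (hIccT (Ioo_subset_Icc_self hx))).deriv,
    (hg' y (hIccT (Ioo_subset_Icc_self hy))).deriv]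
  exact hg1anti (Ioo_subset_Icc_self hx) (Ioo_subset_Icc_self hy) hxy

/-- The volume function of an ideal tetrahedron, f(α, β) = Λ(α) + Λ(β) + Λ(π - α - β),
is strictly concave on the open triangle {α > 0, β > 0, α + β < π}. -/
theorem idealTetrahedronVolume_strictConcaveOn :
    StrictConcaveOn ℝ
      {p : ℝ × ℝ | 0 < p.1 ∧ 0 < p.2 ∧ p.1 + p.2 < Real.pi}
      (fun p : ℝ × ℝ =>
        lobachevsky p.1 + lobachevsky p.2 + lobachevsky (Real.pi - p.1 - p.2)) := by
  constructor
  · -- convexity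
    intro x hx y hy a b ha hb hab
    simp only [Set.mem_setOf_eq, Prod.fst_add, Prod.snd_add, Prod.smul_fst, Prod.smul_snd,
      smul_eq_mul] at hx hy ⊢
    refine ⟨combo_pos ha hb hab hx.1 hy.1, combo_pos ha hb hab hx.2.1 hy.2.1, ?_⟩
    have := combo_lt ha hb hab hx.2.2 hy.2.2
    linarith
  · intro p hp q hq hpq a b ha hb hab
    set u := q.1 - p.1 with hu
    set v := q.2 - p.2 with hv
    have huv : ¬(u = 0 ∧ v = 0) := by
      rintro ⟨h1, h2⟩
      apply hpq
      apply Prod.ext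
      · rw [hu] at h1; linarith [sub_eq_zero.1 h1]
      · rw [hv] at h2; linarith [sub_eq_zero.1 h2]
    obtain ⟨hp1, hp2, hp3⟩ := hp
    obtain ⟨hq1, hq2, hq3⟩ := hq
    have hmem : ∀ t ∈ Set.Icc (0:ℝ) 1,
        0 < p.1 + t*u ∧ 0 < p.2 + t*v ∧ (p.1 + t*u) + (p.2 + t*v) < Real.pi := by
      intro t ht
      obtain ⟨ht0, ht1⟩ := ht
      have hw : (1 - t) + t = 1 := by ring
      refine ⟨?_, ?_, ?_⟩
      · calc (0:ℝ) < (1-t) * p.1 + t * q.1 := combo_pos (by linarith) ht0 hw hp1 hq1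
        _ = p.1 + t*u := by rw [hu]; ring
      · calc (0:ℝ) < (1-t) * p.2 + t * q.2 := combo_pos (by linarith) ht0 hw hp2 hq2
        _ = p.2 + t*v := by rw [hv]; ring
      · calc (p.1 + t*u) + (p.2 + t*v) = (1-t) * (p.1 + p.2) + t * (q.1 + q.2) := by
              rw [hu, hv]; ring
        _ < Real.pi := combo_lt (by linarith) ht0 hw hp3 hq3
    have hline := line_strictConcave p.1 p.2 u v huv hmem
    have key := hline.2 (Set.left_mem_Icc.2 zero_le_one) (Set.right_mem_Icc.2 zero_le_one)
      (zero_ne_one) ha hb hab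
    simp only [smul_eq_mul, mul_zero, mul_one, zero_mul, one_mul, add_zero, zero_add] at key ⊢
    have e1a : p.1 + u = q.1 := by rw [hu]; ring
    have e1b : p.2 + v = q.2 := by rw [hv]; ring
    have eba : p.1 + b*u = (a • p + b • q).1 := by
      simp only [Prod.fst_add, Prod.smul_fst, smul_eq_mul, hu]; nlinarith [hab]
    have ebb : p.2 + b*v = (a • p + b • q).2 := by
      simp only [Prod.snd_add, Prod.smul_snd, smul_eq_mul, hv]; nlinarith [hab]
    rw [e1a, e1b, eba, ebb] at key
    exact key
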